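/- Let G be a group and χ : G → k× a character with associated algebra automorphism σ_χ of the group algebra kG defined by σ_χ(g) = χ(g)g. Then for any central element e ∈ G, the Ore extension H = kG[z; σ_χ] is a Hopf algebra extending the Hopf structure on kG, with z a (1, e)-skew primitive element: Δ(z) = z ⊗ 1 + e ⊗ z, ε(z) = 0, S(z) = −e⁻¹ z. -/

import Mathlib

open scoped TensorProduct

open MonoidAlgebra MulOpposite

set_option maxHeartbeats 1000000
set_option synthInstance.maxHeartbeats 100000

lemma aux_pow_rel {k B : Type*} [CommSemiring k] [Ring B] [Algebra k B]
    (c w : B) (u : k) (h : w * c = u • (c * w)) (n : ℕ) :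
    w ^ n * c = u ^ n • (c * w ^ n) := by
  induction n with
  | zero => simp
  | succ n ih =>
    rw [pow_succ, mul_assoc, h, mul_smul_comm, ← mul_assoc, ih, smul_mul_assoc, smul_smul,
      mul_assoc, ← pow_succ, ← pow_succ']

lemma aux_oreLift {k G H B : Type*} [Field k] [Group G] [Ring H] [Algebra k H]
    [Ring B] [Algebra k B]
    (χ : G →* kˣ) (ι : MonoidAlgebra k G →ₐ[k] H) (z : H)
    (hrel : ∀ g : G, z * ι (of k G g) = (χ g : k) • (ι (of k G g) * z))
    (b : Module.Basis (G × ℕ) k H) (hb : ∀ g n, b (g, n) = ι (of k G g) * z ^ n)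
    (f : MonoidAlgebra k G →ₐ[k] B) (w : B)
    (hw : ∀ g : G, w * f (of k G g) = (χ g : k) • (f (of k G g) * w)) :
    ∃ φ : H →ₐ[k] B, (∀ g, φ (ι (of k G g)) = f (of k G g)) ∧ φ z = w := by
  classical
  set φ₀ : H →ₗ[k] B := b.constr k (fun p => f (of k G p.1) * w ^ p.2) with hφ₀
  have hb0 : ∀ p : G × ℕ, φ₀ (b p) = f (of k G p.1) * w ^ p.2 := fun p => b.constr_basis k _ p
  have hone : φ₀ 1 = 1 := by
    have h1 : (1 : H) = b (1, 0) := by rw [hb, map_one, map_one, pow_zero, one_mul]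
    rw [h1, hb0]; simp only [pow_zero, mul_one, map_one]
  have hkeyH : ∀ (p q : G × ℕ), b p * b q = ((χ q.1 : k) ^ p.2) • b (p.1 * q.1, p.2 + q.2) := by
    rintro ⟨g, n⟩ ⟨h, m⟩
    rw [hb, hb, hb]
    rw [mul_assoc, ← mul_assoc (z ^ n), aux_pow_rel _ _ _ (hrel h), smul_mul_assoc,
      mul_smul_comm, map_mul, map_mul]
    simp only [mul_assoc, pow_add]
  have hkeyB : ∀ (p q : G × ℕ),
      (f (of k G p.1) * w ^ p.2) * (f (of k G q.1) * w ^ q.2)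
        = ((χ q.1 : k) ^ p.2) • (f (of k G (p.1 * q.1)) * w ^ (p.2 + q.2)) := by
    rintro ⟨g, n⟩ ⟨h, m⟩
    rw [mul_assoc, ← mul_assoc (w ^ n), aux_pow_rel _ _ _ (hw h), smul_mul_assoc,
      mul_smul_comm, map_mul, map_mul]
    simp only [mul_assoc, pow_add]
  have hmul : ∀ x y : H, φ₀ (x * y) = φ₀ x * φ₀ y := by
    have : (LinearMap.mul k H).compr₂ φ₀ = (LinearMap.mul k B).compl₁₂ φ₀ φ₀ := by
      apply b.ext; intro p
      apply b.ext; intro q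
      simp only [LinearMap.compr₂_apply, LinearMap.compl₁₂_apply, LinearMap.mul_apply']
      rw [hkeyH, map_smul, hb0, hb0, hb0, hkeyB]
    intro x y
    have h2 := LinearMap.congr_fun (LinearMap.congr_fun this x) y
    simpa using h2
  refine ⟨AlgHom.ofLinearMap φ₀ hone hmul, fun g => ?_, ?_⟩
  · have h1 : ι (of k G g) = b (g, 0) := by rw [hb, pow_zero, mul_one]
    show φ₀ _ = _
    rw [h1, hb0]; simp only [pow_zero, mul_one]
  · have h1 : z = b (1, 1) := by rw [hb, map_one, map_one, pow_one, one_mul]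
    show φ₀ _ = _
    rw [h1, hb0]
    show f (of k G 1) * w ^ 1 = w
    rw [show of k G (1:G) = 1 from map_one _, map_one, pow_one, one_mul]

lemma aux_oreExt {k G H B : Type*} [Field k] [Group G] [Ring H] [Algebra k H]
    [Ring B] [Algebra k B]
    (ι : MonoidAlgebra k G →ₐ[k] H) (z : H)
    (b : Module.Basis (G × ℕ) k H) (hb : ∀ g n, b (g, n) = ι (of k G g) * z ^ n)
    (φ ψ : H →ₐ[k] B)
    (hg : ∀ g, φ (ι (of k G g)) = ψ (ι (of k G g))) (hz : φ z = ψ z) : φ = ψ := by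
  have h : φ.toLinearMap = ψ.toLinearMap := by
    apply b.ext
    rintro ⟨g, n⟩
    simp only [AlgHom.toLinearMap_apply, hb, map_mul, map_pow, hg, hz]
  ext x
  exact LinearMap.congr_fun h x


/-- Let `χ : G → kˣ` be a character of a group `G`, let `e` be central in `G` and let
`H = kG[z; σ_χ]` be the Ore extension of the group algebra (i.e. `H` contains `kG`, has
the commutation rule `z·g = χ(g)·g·z`, and is free over `kG` with basis the powers of
`z`).  Then the Hopf algebra structure of `kG` extends to `H` with `z` a `(1, e)`-skew
primitive element: `Δ(z) = z ⊗ 1 + e ⊗ z`, `ε(z) = 0`, `S(z) = -e⁻¹ z`. -/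
theorem stmt14 {k : Type u} [Field k] {G : Type u} [Group G]
    (χ : G →* kˣ) (e : G) (he : ∀ g : G, e * g = g * e)
    (H : Type u) [Ring H] [Algebra k H]
    (ι : MonoidAlgebra k G →ₐ[k] H) (z : H)
    (hrel : ∀ g : G, z * ι (of k G g) = (χ g : k) • (ι (of k G g) * z))
    (hbasis : ∃ b : Module.Basis (G × ℕ) k H, ∀ g n, b (g, n) = ι (of k G g) * z ^ n) :
    ∃ (Δ : H →ₐ[k] H ⊗[k] H) (ε : H →ₐ[k] k) (S : H →ₐ[k] Hᵐᵒᵖ),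
      -- values on the grouplikes and on `z`
      (∀ g : G, Δ (ι (of k G g)) = ι (of k G g) ⊗ₜ[k] ι (of k G g)) ∧
      Δ z = z ⊗ₜ[k] (1 : H) + ι (of k G e) ⊗ₜ[k] z ∧
      (∀ g : G, ε (ι (of k G g)) = 1) ∧
      ε z = 0 ∧
      (∀ g : G, S (ι (of k G g)) = op (ι (of k G g⁻¹))) ∧
      S z = op (-(ι (of k G e⁻¹) * z)) ∧
      -- coassociativity
      (∀ h : H, (TensorProduct.assoc k H H H)
          ((TensorProduct.map Δ.toLinearMap LinearMap.id) (Δ h))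
        = (TensorProduct.map LinearMap.id Δ.toLinearMap) (Δ h)) ∧
      -- counit axioms
      (∀ h : H, (TensorProduct.lid k H) ((TensorProduct.map ε.toLinearMap LinearMap.id) (Δ h)) = h) ∧
      (∀ h : H, (TensorProduct.rid k H) ((TensorProduct.map LinearMap.id ε.toLinearMap) (Δ h)) = h) ∧
      -- antipode axioms
      (∀ h : H, (LinearMap.mul' k H)
          ((TensorProduct.map ((opLinearEquiv k).symm.toLinearMap ∘ₗ S.toLinearMap)
            LinearMap.id) (Δ h)) = algebraMap k H (ε h)) ∧
      (∀ h : H, (LinearMap.mul' k H)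
          ((TensorProduct.map LinearMap.id ((opLinearEquiv k).symm.toLinearMap ∘ₗ S.toLinearMap))
            (Δ h)) = algebraMap k H (ε h)) := by
  classical
  obtain ⟨b, hb⟩ := hbasis
  -- the comultiplication
  set mΔ : G →* H ⊗[k] H :=
    { toFun := fun g => ι (of k G g) ⊗ₜ[k] ι (of k G g)
      map_one' := by
        show ι (of k G (1:G)) ⊗ₜ[k] ι (of k G (1:G)) = 1
        rw [show of k G (1:G) = 1 from map_one _, map_one, Algebra.TensorProduct.one_def]
      map_mul' := by
        intro a c
        show ι (of k G (a * c)) ⊗ₜ[k] ι (of k G (a * c))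
          = (ι (of k G a) ⊗ₜ[k] ι (of k G a)) * (ι (of k G c) ⊗ₜ[k] ι (of k G c))
        rw [map_mul, map_mul, Algebra.TensorProduct.tmul_mul_tmul] } with hmΔ
  set fΔ : MonoidAlgebra k G →ₐ[k] H ⊗[k] H := MonoidAlgebra.lift k (H ⊗[k] H) G mΔ with hfΔ
  have hfΔof : ∀ g : G, fΔ (of k G g) = ι (of k G g) ⊗ₜ[k] ι (of k G g) := fun g => by
    rw [hfΔ, lift_of]; rfl
  have hwΔ : ∀ g : G,
      (z ⊗ₜ[k] (1 : H) + ι (of k G e) ⊗ₜ[k] z) * fΔ (of k G g)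
        = (χ g : k) • (fΔ (of k G g) * (z ⊗ₜ[k] (1 : H) + ι (of k G e) ⊗ₜ[k] z)) := by
    intro g
    rw [hfΔof, add_mul, mul_add, Algebra.TensorProduct.tmul_mul_tmul,
      Algebra.TensorProduct.tmul_mul_tmul, Algebra.TensorProduct.tmul_mul_tmul,
      Algebra.TensorProduct.tmul_mul_tmul, hrel g, one_mul, mul_one, smul_add,
      TensorProduct.smul_tmul', ← TensorProduct.smul_tmul', TensorProduct.tmul_smul]
    have h1 : ι (of k G e) * ι (of k G g) = ι (of k G (e * g)) := by rw [map_mul, map_mul]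
    have h2 : ι (of k G g) * ι (of k G e) = ι (of k G (g * e)) := by rw [map_mul, map_mul]
    rw [h1, h2, he g]
  obtain ⟨Δ, hΔg0, hΔz⟩ := aux_oreLift χ ι z hrel b hb fΔ _ hwΔ
  have hΔg : ∀ g : G, Δ (ι (of k G g)) = ι (of k G g) ⊗ₜ[k] ι (of k G g) := fun g => by
    rw [hΔg0, hfΔof]
  -- the counit
  set fε : MonoidAlgebra k G →ₐ[k] k := MonoidAlgebra.lift k k G 1 with hfε
  have hfεof : ∀ g : G, fε (of k G g) = 1 := fun g => by
    rw [hfε, lift_of]; rfl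
  have hwε : ∀ g : G, (0 : k) * fε (of k G g) = (χ g : k) • (fε (of k G g) * 0) := by
    intro g; rw [zero_mul, mul_zero, smul_zero]
  obtain ⟨ε, hεg0, hεz⟩ := aux_oreLift χ ι z hrel b hb fε 0 hwε
  have hεg : ∀ g : G, ε (ι (of k G g)) = 1 := fun g => by rw [hεg0, hfεof]
  -- the antipode
  set mS : G →* Hᵐᵒᵖ :=
    { toFun := fun g => op (ι (of k G g⁻¹))
      map_one' := by
        show op (ι (of k G (1:G)⁻¹)) = 1
        rw [inv_one, show of k G (1:G) = 1 from map_one _, map_one, op_one]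
      map_mul' := by
        intro a c
        show op (ι (of k G (a * c)⁻¹)) = op (ι (of k G a⁻¹)) * op (ι (of k G c⁻¹))
        rw [mul_inv_rev, map_mul, map_mul, ← op_mul] } with hmS
  set fS : MonoidAlgebra k G →ₐ[k] Hᵐᵒᵖ := MonoidAlgebra.lift k Hᵐᵒᵖ G mS with hfS
  have hfSof : ∀ g : G, fS (of k G g) = op (ι (of k G g⁻¹)) := fun g => by
    rw [hfS, lift_of]; rfl
  have hwS : ∀ g : G,
      op (-(ι (of k G e⁻¹) * z)) * fS (of k G g)
        = (χ g : k) • (fS (of k G g) * op (-(ι (of k G e⁻¹) * z))) := by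
    intro g
    rw [hfSof, ← op_mul, ← op_mul, ← op_smul]
    congr 1
    rw [mul_neg, neg_mul, mul_assoc, hrel g⁻¹, mul_smul_comm, smul_neg, smul_smul]
    have hu : (χ g : k) * (χ g⁻¹ : k) = 1 := by
      rw [← Units.val_mul, ← map_mul]; simp
    rw [hu, one_smul, ← mul_assoc, ← mul_assoc]
    congr 2
    have h1 : ι (of k G g⁻¹) * ι (of k G e⁻¹) = ι (of k G (g⁻¹ * e⁻¹)) := by rw [map_mul, map_mul]
    have h2 : ι (of k G e⁻¹) * ι (of k G g⁻¹) = ι (of k G (e⁻¹ * g⁻¹)) := by rw [map_mul, map_mul]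
    rw [h1, h2, show g⁻¹ * e⁻¹ = e⁻¹ * g⁻¹ from by
      rw [← mul_inv_rev, ← mul_inv_rev, he g]]
  obtain ⟨S, hSg0, hSz⟩ := aux_oreLift χ ι z hrel b hb fS _ hwS
  have hSg : ∀ g : G, S (ι (of k G g)) = op (ι (of k G g⁻¹)) := fun g => by
    rw [hSg0, hfSof]
  -- general facts about products with `ι (of g)`
  have hprod : ∀ a c : G, ι (of k G a) * ι (of k G c) = ι (of k G (a * c)) := by
    intro a c; rw [map_mul, map_mul]
  -- the linear maps in the antipode axioms
  set F1 : H ⊗[k] H →ₗ[k] H := (LinearMap.mul' k H).comp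
    (TensorProduct.map ((opLinearEquiv k).symm.toLinearMap ∘ₗ S.toLinearMap) LinearMap.id)
    with hF1
  set F2 : H ⊗[k] H →ₗ[k] H := (LinearMap.mul' k H).comp
    (TensorProduct.map LinearMap.id ((opLinearEquiv k).symm.toLinearMap ∘ₗ S.toLinearMap))
    with hF2
  have hF1t : ∀ a c : H, F1 (a ⊗ₜ[k] c) = unop (S a) * c := by
    intro a c
    rw [hF1, LinearMap.comp_apply, TensorProduct.map_tmul, LinearMap.mul'_apply]
    rfl
  have hF2t : ∀ a c : H, F2 (a ⊗ₜ[k] c) = a * unop (S c) := by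
    intro a c
    rw [hF2, LinearMap.comp_apply, TensorProduct.map_tmul, LinearMap.mul'_apply]
    rfl
  have hF1mul : ∀ (s : H ⊗[k] H) (c d : H),
      F1 (s * (c ⊗ₜ[k] d)) = unop (S c) * F1 s * d := by
    intro s c d
    induction s using TensorProduct.induction_on with
    | zero => simp
    | tmul a bb =>
        rw [Algebra.TensorProduct.tmul_mul_tmul, hF1t, hF1t, map_mul, unop_mul,
          mul_assoc, mul_assoc, mul_assoc]
    | add x y hx hy => rw [add_mul, map_add, hx, hy, map_add, mul_add, add_mul]
  have hF2mul : ∀ (s : H ⊗[k] H) (c d : H),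
      F2 ((c ⊗ₜ[k] d) * s) = c * F2 s * unop (S d) := by
    intro s c d
    induction s using TensorProduct.induction_on with
    | zero => simp
    | tmul a bb =>
        rw [Algebra.TensorProduct.tmul_mul_tmul, hF2t, hF2t, map_mul, unop_mul,
          mul_assoc, mul_assoc, mul_assoc]
    | add x y hx hy => rw [mul_add, map_add, hx, hy, map_add, mul_add, add_mul]
  -- the convolution identity is multiplicative
  have hP1mul : ∀ x y : H, F1 (Δ x) = ε x • 1 → F1 (Δ y) = ε y • 1 →
      F1 (Δ (x * y)) = ε (x * y) • 1 := by
    intro x y hx hy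
    have hT : ∀ t : H ⊗[k] H, F1 (Δ x * t) = ε x • F1 t := by
      intro t
      induction t using TensorProduct.induction_on with
      | zero => simp
      | tmul c d =>
          rw [hF1mul, hx, mul_smul_comm, mul_one, smul_mul_assoc, hF1t]
      | add u v hu hv => rw [mul_add, map_add, hu, hv, map_add, smul_add]
    rw [map_mul, hT, hy, smul_smul, map_mul]
  have hP2mul : ∀ x y : H, F2 (Δ x) = ε x • 1 → F2 (Δ y) = ε y • 1 →
      F2 (Δ (x * y)) = ε (x * y) • 1 := by
    intro x y hx hy
    have hT : ∀ t : H ⊗[k] H, F2 (t * Δ y) = ε y • F2 t := by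
      intro t
      induction t using TensorProduct.induction_on with
      | zero => simp
      | tmul c d =>
          rw [hF2mul, hy, mul_smul_comm, mul_one, smul_mul_assoc, hF2t]
      | add u v hu hv => rw [add_mul, map_add, hu, hv, map_add, smul_add]
    rw [map_mul, hT, hx, smul_smul, map_mul, mul_comm (ε y)]
  -- the convolution identity on the generators
  have hP1g : ∀ g : G, F1 (Δ (ι (of k G g))) = ε (ι (of k G g)) • 1 := by
    intro g
    rw [hΔg, hF1t, hSg, unop_op, hεg, one_smul, hprod, inv_mul_cancel,
      show of k G (1:G) = 1 from map_one _, map_one]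
  have hP2g : ∀ g : G, F2 (Δ (ι (of k G g))) = ε (ι (of k G g)) • 1 := by
    intro g
    rw [hΔg, hF2t, hSg, unop_op, hεg, one_smul, hprod, mul_inv_cancel,
      show of k G (1:G) = 1 from map_one _, map_one]
  have hP1z : F1 (Δ z) = ε z • 1 := by
    rw [hΔz, map_add, hF1t, hF1t, hSz, hSg e, unop_op, unop_op, mul_one, hεz, zero_smul]
    simp
  have hP2z : F2 (Δ z) = ε z • 1 := by
    rw [hΔz, map_add, hF2t, hF2t, hSz, unop_op, hεz, zero_smul, map_one, unop_one, mul_one,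
      mul_neg, ← mul_assoc, hprod, mul_inv_cancel, show of k G (1:G) = 1 from map_one _,
      map_one, one_mul]
    simp
  have hP1one : F1 (Δ 1) = ε 1 • 1 := by
    rw [map_one Δ, map_one ε, one_smul, Algebra.TensorProduct.one_def, hF1t, map_one S,
      unop_one, one_mul]
  have hP2one : F2 (Δ 1) = ε 1 • 1 := by
    rw [map_one Δ, map_one ε, one_smul, Algebra.TensorProduct.one_def, hF2t, map_one S,
      unop_one, mul_one]
  have hP1zn : ∀ n : ℕ, F1 (Δ (z ^ n)) = ε (z ^ n) • 1 := by
    intro n; induction n with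
    | zero => simpa using hP1one
    | succ n ih => rw [pow_succ]; exact hP1mul _ _ ih hP1z
  have hP2zn : ∀ n : ℕ, F2 (Δ (z ^ n)) = ε (z ^ n) • 1 := by
    intro n; induction n with
    | zero => simpa using hP2one
    | succ n ih => rw [pow_succ]; exact hP2mul _ _ ih hP2z
  have hP1all : ∀ h : H, F1 (Δ h) = ε h • 1 := by
    have hl : F1 ∘ₗ Δ.toLinearMap = (Algebra.linearMap k H) ∘ₗ ε.toLinearMap := by
      apply b.ext; rintro ⟨g, n⟩
      simp only [LinearMap.comp_apply, AlgHom.toLinearMap_apply, Algebra.linearMap_apply, hb]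
      rw [hP1mul _ _ (hP1g g) (hP1zn n), Algebra.algebraMap_eq_smul_one, map_mul]
    intro h
    have h2 := LinearMap.congr_fun hl h
    simp only [LinearMap.comp_apply, AlgHom.toLinearMap_apply, Algebra.linearMap_apply,
      Algebra.algebraMap_eq_smul_one] at h2
    exact h2
  have hP2all : ∀ h : H, F2 (Δ h) = ε h • 1 := by
    have hl : F2 ∘ₗ Δ.toLinearMap = (Algebra.linearMap k H) ∘ₗ ε.toLinearMap := by
      apply b.ext; rintro ⟨g, n⟩
      simp only [LinearMap.comp_apply, AlgHom.toLinearMap_apply, Algebra.linearMap_apply, hb]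
      rw [hP2mul _ _ (hP2g g) (hP2zn n), Algebra.algebraMap_eq_smul_one, map_mul]
    intro h
    have h2 := LinearMap.congr_fun hl h
    simp only [LinearMap.comp_apply, AlgHom.toLinearMap_apply, Algebra.linearMap_apply,
      Algebra.algebraMap_eq_smul_one] at h2
    exact h2
  refine ⟨Δ, ε, S, hΔg, hΔz, hεg, hεz, hSg, hSz, ?_, ?_, ?_, ?_, ?_⟩
  · -- coassociativity
    have hA : (Algebra.TensorProduct.assoc k k k H H H).toAlgHom.comp
        ((Algebra.TensorProduct.map Δ (AlgHom.id k H)).comp Δ)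
        = (Algebra.TensorProduct.map (AlgHom.id k H) Δ).comp Δ := by
      apply aux_oreExt ι z b hb
      · intro g
        simp only [AlgHom.coe_comp, Function.comp_apply, AlgEquiv.toAlgHom_eq_coe, AlgEquiv.coe_toAlgHom,
          AlgHom.coe_coe, hΔg, Algebra.TensorProduct.map_tmul, AlgHom.coe_id, id_eq,
          Algebra.TensorProduct.assoc_tmul]
      · simp only [AlgHom.coe_comp, Function.comp_apply, AlgEquiv.toAlgHom_eq_coe, AlgEquiv.coe_toAlgHom,
          AlgHom.coe_coe, hΔz, map_add, Algebra.TensorProduct.map_tmul, AlgHom.coe_id, id_eq,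
          hΔg, map_one, Algebra.TensorProduct.one_def, TensorProduct.add_tmul,
          TensorProduct.tmul_add, Algebra.TensorProduct.assoc_tmul, add_assoc]
    intro h
    have hassoc : ∀ (s : H ⊗[k] H) (c : H),
        (TensorProduct.assoc k H H H) (s ⊗ₜ[k] c)
        = (Algebra.TensorProduct.assoc k k k H H H) (s ⊗ₜ[k] c) := by
      intro s c
      induction s using TensorProduct.induction_on with
      | zero => rw [TensorProduct.zero_tmul, LinearEquiv.map_zero, map_zero]
      | tmul x y => rw [TensorProduct.assoc_tmul, Algebra.TensorProduct.assoc_tmul]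
      | add u v hu hv => rw [TensorProduct.add_tmul, LinearEquiv.map_add, map_add, hu, hv]
    have hbr1 : ∀ t : H ⊗[k] H,
        (TensorProduct.assoc k H H H) ((TensorProduct.map Δ.toLinearMap LinearMap.id) t)
        = (Algebra.TensorProduct.assoc k k k H H H)
            ((Algebra.TensorProduct.map Δ (AlgHom.id k H)) t) := by
      intro t
      induction t using TensorProduct.induction_on with
      | zero => simp only [map_zero, LinearEquiv.map_zero, map_zero]
      | tmul a c =>
          rw [TensorProduct.map_tmul, Algebra.TensorProduct.map_tmul]
          exact hassoc (Δ a) c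
      | add x y hx hy =>
          rw [map_add, LinearEquiv.map_add, hx, hy, map_add, map_add]
    have hbr2 : ∀ t : H ⊗[k] H,
        (TensorProduct.map LinearMap.id Δ.toLinearMap) t
        = (Algebra.TensorProduct.map (AlgHom.id k H) Δ) t := by
      intro t
      induction t using TensorProduct.induction_on with
      | zero => rw [map_zero, map_zero]
      | tmul a c => rw [TensorProduct.map_tmul, Algebra.TensorProduct.map_tmul]; rfl
      | add x y hx hy => rw [map_add, hx, hy, map_add]
    rw [hbr1, hbr2]
    have h2 := AlgHom.congr_fun hA h
    simpa only [AlgHom.coe_comp, Function.comp_apply, AlgEquiv.toAlgHom_eq_coe, AlgEquiv.coe_toAlgHom,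
      AlgHom.coe_coe] using h2
  · -- left counit
    have hA : (Algebra.TensorProduct.lid k H).toAlgHom.comp
        ((Algebra.TensorProduct.map ε (AlgHom.id k H)).comp Δ) = AlgHom.id k H := by
      apply aux_oreExt ι z b hb
      · intro g
        simp only [AlgHom.coe_comp, Function.comp_apply, AlgEquiv.toAlgHom_eq_coe, AlgEquiv.coe_toAlgHom,
          AlgHom.coe_coe, hΔg, Algebra.TensorProduct.map_tmul, AlgHom.coe_id, id_eq,
          Algebra.TensorProduct.lid_tmul, hεg, one_smul]
      · simp only [AlgHom.coe_comp, Function.comp_apply, AlgEquiv.toAlgHom_eq_coe, AlgEquiv.coe_toAlgHom,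
          AlgHom.coe_coe, hΔz, map_add, Algebra.TensorProduct.map_tmul, AlgHom.coe_id,
          id_eq, hεz, hεg, Algebra.TensorProduct.lid_tmul, zero_smul, one_smul, zero_add]
    intro h
    have hbr : ∀ t : H ⊗[k] H,
        (TensorProduct.lid k H) ((TensorProduct.map ε.toLinearMap LinearMap.id) t)
        = (Algebra.TensorProduct.lid k H) ((Algebra.TensorProduct.map ε (AlgHom.id k H)) t) := by
      intro t
      induction t using TensorProduct.induction_on with
      | zero => simp
      | tmul a c => simp
      | add x y hx hy => simp [hx, hy]
    rw [hbr]
    have h2 := AlgHom.congr_fun hA h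
    simpa only [AlgHom.coe_comp, Function.comp_apply, AlgEquiv.toAlgHom_eq_coe, AlgEquiv.coe_toAlgHom,
      AlgHom.coe_coe, AlgHom.coe_id, id_eq] using h2
  · -- right counit
    have hA : (Algebra.TensorProduct.rid k k H).toAlgHom.comp
        ((Algebra.TensorProduct.map (AlgHom.id k H) ε).comp Δ) = AlgHom.id k H := by
      apply aux_oreExt ι z b hb
      · intro g
        simp only [AlgHom.coe_comp, Function.comp_apply, AlgEquiv.toAlgHom_eq_coe, AlgEquiv.coe_toAlgHom,
          AlgHom.coe_coe, hΔg, Algebra.TensorProduct.map_tmul, AlgHom.coe_id, id_eq,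
          Algebra.TensorProduct.rid_tmul, hεg, one_smul]
      · simp only [AlgHom.coe_comp, Function.comp_apply, AlgEquiv.toAlgHom_eq_coe, AlgEquiv.coe_toAlgHom,
          AlgHom.coe_coe, hΔz, map_add, Algebra.TensorProduct.map_tmul, AlgHom.coe_id,
          id_eq, hεz, hεg, Algebra.TensorProduct.rid_tmul, zero_smul, one_smul, add_zero,
          TensorProduct.tmul_zero, map_zero, map_one]
    intro h
    have hbr : ∀ t : H ⊗[k] H,
        (TensorProduct.rid k H) ((TensorProduct.map LinearMap.id ε.toLinearMap) t)
        = (Algebra.TensorProduct.rid k k H) ((Algebra.TensorProduct.map (AlgHom.id k H) ε) t) := by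
      intro t
      induction t using TensorProduct.induction_on with
      | zero => simp
      | tmul a c => simp
      | add x y hx hy => simp [hx, hy]
    rw [hbr]
    have h2 := AlgHom.congr_fun hA h
    simpa only [AlgHom.coe_comp, Function.comp_apply, AlgEquiv.toAlgHom_eq_coe, AlgEquiv.coe_toAlgHom,
      AlgHom.coe_coe, AlgHom.coe_id, id_eq] using h2
  · -- left antipode axiom
    intro h
    rw [Algebra.algebraMap_eq_smul_one, ← hP1all h, hF1, LinearMap.comp_apply]
  · -- right antipode axiom
    intro h
    rw [Algebra.algebraMap_eq_smul_one, ← hP2all h, hF2, LinearMap.comp_apply]
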